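/- Let UT_n be the upper triangular matrices over a field F with the elementary G-grading determined by η = (g₁,…,g_{n−1}), where deg e_{i,i+1} = g_i. Then UT_n admits a degree-inverting involution if and only if g_i = g_{n−i}⁻¹ for every i = 1,…,n−1. -/

import Mathlib

set_option synthInstance.maxHeartbeats 400000
set_option maxHeartbeats 1600000

open Matrix

/-- The algebra `UT_n` of upper triangular `n × n` matrices over `F`. -/
def UTn (n : ℕ) (F : Type*) [Field F] : Subalgebra F (Matrix (Fin n) (Fin n) F) where
  carrier := {M | M.BlockTriangular id}
  mul_mem' := fun ha hb => ha.mul hb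
  one_mem' := Matrix.blockTriangular_one
  add_mem' := fun ha hb => ha.add hb
  zero_mem' := Matrix.blockTriangular_zero
  algebraMap_mem' := fun r => by
    rw [Matrix.algebraMap_eq_diagonal]
    exact Matrix.blockTriangular_diagonal (b := id) _

/-- For the elementary grading on `UT_n` determined by `η = (g₁,…,g_{n−1})`
(with `deg e_{i,i+1} = η i`), the degree of the matrix unit `e_{ij}` (for `i ≤ j`)
is the ordered product `η i * η (i+1) * ⋯ * η (j-1)` (indices `0`-based). -/
def degElem {G : Type*} [Group G] (η : ℕ → G) (i j : ℕ) : G :=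
  (((List.range (j - i)).map fun k => η (i + k)).prod)

/-- The homogeneous component of degree `g` of `UT_n` for the elementary grading
given by `η`: those upper triangular matrices all of whose nonzero entries sit
in positions of degree `g`. -/
def utComponent {G : Type*} [Group G] (n : ℕ) {F : Type*} [Field F]
    (η : ℕ → G) (g : G) : Set (UTn n F) :=
  {M | ∀ i j : Fin n, (M : Matrix (Fin n) (Fin n) F) i j ≠ 0 → degElem η i j = g}

/-! ### Auxiliary lemmas -/

section Aux

variable {F : Type*} [Field F] {n : ℕ}

theorem degInv_stdBasis_mem {i j : Fin n} (h : i ≤ j) (c : F) :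
    Matrix.single i j c ∈ UTn n F := by
  intro p q hpq
  by_cases hp : i = p ∧ j = q
  · exfalso
    rcases hp with ⟨hp, hq⟩
    subst hp; subst hq
    exact absurd h (not_le.mpr hpq)
  · exact Matrix.single_apply_of_ne _ _ _ _ _ hp

theorem degInv_diag_mul {A B : Matrix (Fin n) (Fin n) F} (hA : A.BlockTriangular id)
    (hB : B.BlockTriangular id) (p : Fin n) : (A * B) p p = A p p * B p p := by
  rw [Matrix.mul_apply]
  refine Finset.sum_eq_single p (fun r _ hr => ?_) (fun h => absurd (Finset.mem_univ p) h)
  rcases lt_or_gt_of_ne hr with h | h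
  · rw [hA (show (id r : Fin n) < id p from h), zero_mul]
  · rw [hB (show (id p : Fin n) < id r from h), mul_zero]

theorem degInv_pow_apply_zero {M : Matrix (Fin n) (Fin n) F} (hM : M.BlockTriangular id)
    (hd : ∀ p, M p p = 0) (m : ℕ) :
    ∀ p q : Fin n, (q : ℕ) < (p : ℕ) + m → (M ^ m) p q = 0 := by
  induction m with
  | zero =>
    intro p q hq
    rw [pow_zero]
    refine Matrix.one_apply_ne (fun hc => ?_)
    subst hc
    omega
  | succ m ih =>
    intro p q hq
    rw [pow_succ, Matrix.mul_apply]
    refine Finset.sum_eq_zero fun r _ => ?_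
    by_cases hr : (r : ℕ) < (p : ℕ) + m
    · rw [ih p r hr, zero_mul]
    · have hqr : (q : ℕ) ≤ (r : ℕ) := by omega
      rcases eq_or_lt_of_le hqr with he | hlt
      · have hqr' : q = r := Fin.ext he
        subst hqr'
        rw [hd q, mul_zero]
      · rw [hM (show (id q : Fin n) < id r from hlt), mul_zero]

theorem degInv_idem_pow {A : Type*} [Monoid A] {x : A} (hx : x * x = x) (m : ℕ) :
    x ^ (m + 1) = x := by
  induction m with
  | zero => rw [pow_one]
  | succ m ih => rw [pow_succ, ih, hx]

theorem degInv_degElem_single {G : Type*} [Group G] (η : ℕ → G) (i : ℕ) :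
    degElem η i (i + 1) = η i := by
  simp [degElem, List.range_succ]

theorem degInv_degElem_prod {G : Type*} [Group G] {n : ℕ} (η : ℕ → G)
    (h : ∀ i : ℕ, i < n - 1 → η i = (η (n - 2 - i))⁻¹) :
    ∀ (m i : ℕ), i + m ≤ n - 1 →
      (((List.range m).map fun k => η (i + k)).prod) *
        (((List.range m).map fun k => η ((n - 1 - (i + m)) + k)).prod) = 1 := by
  intro m
  induction m with
  | zero => intro i _; simp
  | succ m ih =>
    intro i him
    have hA : (((List.range (m + 1)).map fun k => η (i + k)).prod)
        = (((List.range m).map fun k => η (i + k)).prod) * η (i + m) := by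
      rw [List.range_succ]
      simp
    have hB : (((List.range (m + 1)).map fun k => η ((n - 1 - (i + (m + 1))) + k)).prod)
        = η (n - 2 - (i + m)) *
          (((List.range m).map fun k => η ((n - 1 - (i + m)) + k)).prod) := by
      rw [List.range_succ_eq_map]
      rw [List.map_cons, List.prod_cons, List.map_map]
      have hfun : ((fun k => η ((n - 1 - (i + (m + 1))) + k)) ∘ Nat.succ)
          = fun k => η ((n - 1 - (i + m)) + k) := by
        funext k
        simp only [Function.comp_apply]
        congr 1
        omega
      rw [hfun]
      congr 2
      omega
    rw [hA, hB]
    have hx : η (n - 2 - (i + m)) = (η (i + m))⁻¹ := by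
      have hh := h (i + m) (by omega)
      rw [hh, inv_inv]
    rw [hx]
    have hIH := ih i (by omega)
    calc (((List.range m).map fun k => η (i + k)).prod) * η (i + m) *
          ((η (i + m))⁻¹ * (((List.range m).map fun k => η ((n - 1 - (i + m)) + k)).prod))
        = (((List.range m).map fun k => η (i + k)).prod) *
          (((List.range m).map fun k => η ((n - 1 - (i + m)) + k)).prod) := by
          rw [mul_assoc]
          congr 1
          rw [← mul_assoc, mul_inv_cancel, one_mul]
      _ = 1 := hIH

theorem degInv_degElem_mul_rev {G : Type*} [Group G] {n : ℕ} (η : ℕ → G)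
    (h : ∀ i : ℕ, i < n - 1 → η i = (η (n - 2 - i))⁻¹) {i j : ℕ}
    (hij : i ≤ j) (hj : j ≤ n - 1) :
    degElem η i j * degElem η (n - 1 - j) (n - 1 - i) = 1 := by
  have hmain := degInv_degElem_prod η h (j - i) i (by omega)
  unfold degElem
  have e3 : n - 1 - j = n - 1 - (i + (j - i)) := by omega
  simp only [e3]
  have e2 : (n - 1 - i) - (n - 1 - (i + (j - i))) = j - i := by omega
  simp only [e2]
  exact hmain

/-- The flip (anti-transpose) map on `UT_n`. -/
def flipUT (M : UTn n F) : UTn n F :=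
  ⟨Matrix.of fun p q => (M : Matrix (Fin n) (Fin n) F) q.rev p.rev, by
    intro p q hpq
    exact M.2 (show (id p.rev : Fin n) < id q.rev from Fin.rev_lt_rev.mpr hpq)⟩

theorem flipUT_apply (M : UTn n F) (p q : Fin n) :
    (flipUT M : Matrix (Fin n) (Fin n) F) p q
      = (M : Matrix (Fin n) (Fin n) F) q.rev p.rev := rfl

theorem flipUT_flipUT (M : UTn n F) : flipUT (flipUT M) = M := by
  apply Subtype.ext
  ext p q
  simp [flipUT]

theorem flipUT_add (M N : UTn n F) : flipUT (M + N) = flipUT M + flipUT N := by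
  apply Subtype.ext
  ext p q
  simp [flipUT]

theorem flipUT_smul (c : F) (M : UTn n F) : flipUT (c • M) = c • flipUT M := by
  apply Subtype.ext
  ext p q
  simp [flipUT]

theorem flipUT_mul (x y : UTn n F) : flipUT (x * y) = flipUT y * flipUT x := by
  apply Subtype.ext
  ext p q
  rw [MulMemClass.coe_mul]
  show ((x : Matrix (Fin n) (Fin n) F) * (y : Matrix (Fin n) (Fin n) F)) q.rev p.rev
    = ((flipUT y : Matrix (Fin n) (Fin n) F) * (flipUT x : Matrix (Fin n) (Fin n) F)) p q
  rw [Matrix.mul_apply, Matrix.mul_apply]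
  have hre : ∑ k : Fin n,
      (flipUT y : Matrix (Fin n) (Fin n) F) p k * (flipUT x : Matrix (Fin n) (Fin n) F) k q
      = ∑ k : Fin n, (y : Matrix (Fin n) (Fin n) F) k p.rev
          * (x : Matrix (Fin n) (Fin n) F) q.rev k := by
    refine Fintype.sum_equiv Fin.revPerm _ _ fun k => ?_
    rw [flipUT_apply, flipUT_apply]
    rfl
  rw [hre]
  exact Finset.sum_congr rfl fun k _ => mul_comm _ _

end Aux

/-- `UT_n` with the elementary `G`-grading given by `η = (g₁,…,g_{n−1})`,
`deg e_{i,i+1} = g_i`, admits a degree-inverting involution (an `F`-linear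
anti-automorphism of order two mapping the component of degree `g` into the component of
degree `g⁻¹`) if and only if `g_i = g_{n−i}⁻¹` for every `i = 1,…,n−1`
(in `0`-based indexing: `η i = (η (n−2−i))⁻¹` for all `i < n−1`). -/
theorem UTn_exists_degInvInvolution_iff
    {F : Type*} [Field F] (hchar : (2 : F) ≠ 0)
    {G : Type*} [Group G] (n : ℕ) (η : ℕ → G) :
    (∃ ρ : (UTn n F) ≃ₗ[F] (UTn n F),
        (∀ x y : UTn n F, ρ (x * y) = ρ y * ρ x) ∧
        (∀ x : UTn n F, ρ (ρ x) = x) ∧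
        (∀ (g : G) (M : UTn n F), M ∈ utComponent n η g →
          ρ M ∈ utComponent n η g⁻¹)) ↔
    (∀ i : ℕ, i < n - 1 → η i = (η (n - 2 - i))⁻¹) := by
  constructor
  · rintro ⟨ρ, hmul, hinv, hdeg⟩
    -- `ρ 1 = 1`
    have hρ1 : ρ (1 : UTn n F) = 1 := by
      have h1 := hmul (ρ (1 : UTn n F)) 1
      rw [mul_one, hinv 1, mul_one] at h1
      exact h1.symm
    -- diagonal matrix units
    set e : Fin n → UTn n F :=
      fun k => ⟨Matrix.single k k 1, degInv_stdBasis_mem le_rfl 1⟩ with he_def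
    have he_mul : ∀ k l : Fin n, e k * e l = if k = l then e k else 0 := by
      intro k l
      apply Subtype.ext
      by_cases hkl : k = l
      · subst hkl
        simp [he_def]
      · have hz : (Matrix.single k k (1 : F)) * Matrix.single l l 1 = 0 :=
          Matrix.single_mul_single_of_ne (1 : F) k k l hkl 1
        simp [he_def, hkl, hz]
    have he_coe : ∀ k : Fin n,
        (e k : Matrix (Fin n) (Fin n) F) = Matrix.single k k 1 := fun k => rfl
    have hsum_e : (∑ k, e k) = (1 : UTn n F) := by
      apply Subtype.ext
      rw [OneMemClass.coe_one, AddSubmonoidClass.coe_finset_sum]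
      ext p q
      rw [Matrix.sum_apply]
      by_cases hpq : p = q
      · subst hpq
        rw [Matrix.one_apply_eq]
        rw [Finset.sum_eq_single p (fun r _ hr => ?_) (fun h => absurd (Finset.mem_univ p) h)]
        · rw [he_coe]
          exact Matrix.single_apply_same _ _ _
        · rw [he_coe]
          exact Matrix.single_apply_of_ne _ _ _ _ _ (fun hc => hr hc.1)
      · rw [Matrix.one_apply_ne hpq]
        refine Finset.sum_eq_zero fun r _ => ?_
        rw [he_coe]
        refine Matrix.single_apply_of_ne _ _ _ _ _ (fun hc => hpq ?_)
        rw [← hc.1, ← hc.2]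
    set f : Fin n → UTn n F := fun k => ρ (e k) with hf_def
    have hf_mul : ∀ k l : Fin n, f k * f l = if k = l then f k else 0 := by
      intro k l
      have h1 := hmul (e l) (e k)
      rw [he_mul l k] at h1
      by_cases hkl : k = l
      · subst hkl
        rw [if_pos rfl] at h1 ⊢
        exact h1.symm
      · rw [if_neg (fun hc => hkl hc.symm), map_zero] at h1
        rw [if_neg hkl]
        exact h1.symm
    have hf_idem : ∀ k, f k * f k = f k := fun k => by rw [hf_mul, if_pos rfl]
    -- each `f k` has a nonzero diagonal entry
    have hf_diag_ne : ∀ k : Fin n, ∃ p, (f k : Matrix (Fin n) (Fin n) F) p p ≠ 0 := by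
      intro k
      by_contra hc
      push_neg at hc
      have hnpos : 0 < n := k.pos
      have hpow : ((f k : Matrix (Fin n) (Fin n) F)) ^ n = 0 := by
        ext p q
        rw [Matrix.zero_apply]
        exact degInv_pow_apply_zero (f k).2 hc n p q (by omega)
      have hfkn : f k = (f k) ^ n := by
        obtain ⟨m, rfl⟩ : ∃ m, n = m + 1 := ⟨n - 1, by omega⟩
        exact (degInv_idem_pow (hf_idem k) m).symm
      have hfk0 : f k = 0 := by
        rw [hfkn]
        apply Subtype.ext
        rw [SubmonoidClass.coe_pow]
        simpa using hpow
      have hek0 : e k = 0 := by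
        apply ρ.injective
        rw [map_zero]
        exact hfk0
      have : (1 : F) = 0 := by
        have := congrArg (fun M : UTn n F => (M : Matrix (Fin n) (Fin n) F) k k) hek0
        simpa [he_def] using this
      exact one_ne_zero this
    choose π hπ using hf_diag_ne
    have hd1 : ∀ k, (f k : Matrix (Fin n) (Fin n) F) (π k) (π k) = 1 := by
      intro k
      have hsq : (f k : Matrix (Fin n) (Fin n) F) (π k) (π k)
          * (f k : Matrix (Fin n) (Fin n) F) (π k) (π k)
          = (f k : Matrix (Fin n) (Fin n) F) (π k) (π k) := by
        have h1 := degInv_diag_mul (f k).2 (f k).2 (π k)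
        rw [← MulMemClass.coe_mul, hf_idem k] at h1
        exact h1.symm
      have h2 : (f k : Matrix (Fin n) (Fin n) F) (π k) (π k)
          * (f k : Matrix (Fin n) (Fin n) F) (π k) (π k)
          = (f k : Matrix (Fin n) (Fin n) F) (π k) (π k) * 1 := by
        rw [mul_one]
        exact hsq
      exact mul_left_cancel₀ (hπ k) h2
    have hπ_inj : Function.Injective π := by
      intro k l hkl
      by_contra hne
      have h0 : f k * f l = 0 := by rw [hf_mul, if_neg hne]
      have h1 := degInv_diag_mul (f k).2 (f l).2 (π k)
      rw [← MulMemClass.coe_mul, h0] at h1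
      rw [hd1 k] at h1
      rw [hkl, hd1 l] at h1
      simpa using h1
    have hπ_bij : Function.Bijective π := Finite.injective_iff_bijective.mp hπ_inj
    -- the conjugating element
    set u : UTn n F := ∑ k, e (π k) * f k with hu_def
    set U : Matrix (Fin n) (Fin n) F := (u : Matrix (Fin n) (Fin n) F) with hU_def
    have hU_tri : U.BlockTriangular id := u.2
    have hU_diag : ∀ p, U p p = 1 := by
      intro p
      obtain ⟨k0, hk0⟩ := hπ_bij.surjective p
      rw [hU_def, hu_def, AddSubmonoidClass.coe_finset_sum, Matrix.sum_apply]
      rw [Finset.sum_eq_single k0 (fun k _ hk => ?_) (fun h => absurd (Finset.mem_univ k0) h)]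
      · rw [MulMemClass.coe_mul, degInv_diag_mul (e (π k0)).2 (f k0).2, ← hk0, hd1 k0, mul_one]
        simp [he_def]
      · rw [MulMemClass.coe_mul, degInv_diag_mul (e (π k)).2 (f k).2]
        have hne : ¬(π k = p ∧ π k = p) := by
          rintro ⟨hc, -⟩
          exact hk (hπ_inj (hc.trans hk0.symm))
        have : (e (π k) : Matrix (Fin n) (Fin n) F) p p = 0 := by
          simpa [he_def] using Matrix.single_apply_of_ne _ _ (1 : F) _ _ hne
        rw [this, zero_mul]
    have hcomm : ∀ k, u * f k = e (π k) * u := by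
      intro k
      have h1 : u * f k = e (π k) * f k := by
        rw [hu_def, Finset.sum_mul]
        rw [Finset.sum_eq_single k (fun j _ hj => ?_) (fun h => absurd (Finset.mem_univ k) h)]
        · rw [mul_assoc, hf_mul k k, if_pos rfl]
        · rw [mul_assoc, hf_mul j k, if_neg hj, mul_zero]
      have h2 : e (π k) * u = e (π k) * f k := by
        rw [hu_def, Finset.mul_sum]
        rw [Finset.sum_eq_single k (fun j _ hj => ?_) (fun h => absurd (Finset.mem_univ k) h)]
        · rw [← mul_assoc, he_mul, if_pos rfl]
        · have hne : π k ≠ π j := fun hc => hj (hπ_inj hc).symm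
          rw [← mul_assoc, he_mul, if_neg hne, zero_mul]
      rw [h1, h2]
    -- matrix level facts about U
    have hdet : U.det = 1 := by
      rw [Matrix.det_of_upperTriangular hU_tri]
      simp [hU_diag]
    have hdet_unit : IsUnit U.det := by rw [hdet]; exact isUnit_one
    have hUUinv : U * U⁻¹ = 1 := Matrix.mul_nonsing_inv U hdet_unit
    have hUinvU : U⁻¹ * U = 1 := Matrix.nonsing_inv_mul U hdet_unit
    haveI : Invertible U := U.invertibleOfIsUnitDet hdet_unit
    have hUinv_tri : (U⁻¹).BlockTriangular id :=
      Matrix.blockTriangular_inv_of_blockTriangular hU_tri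
    have hUinv_diag : ∀ p, (U⁻¹) p p = 1 := by
      intro p
      have h1 := degInv_diag_mul hU_tri hUinv_tri p
      rw [hUUinv, Matrix.one_apply_eq, hU_diag, one_mul] at h1
      exact h1.symm
    have hUf : ∀ k, U * (f k : Matrix (Fin n) (Fin n) F)
        = (e (π k) : Matrix (Fin n) (Fin n) F) * U := by
      intro k
      have h1 := congrArg Subtype.val (hcomm k)
      rw [MulMemClass.coe_mul, MulMemClass.coe_mul] at h1
      exact h1
    have hfUinv : ∀ k, (f k : Matrix (Fin n) (Fin n) F) * U⁻¹
        = U⁻¹ * (e (π k) : Matrix (Fin n) (Fin n) F) := by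
      intro k
      calc (f k : Matrix (Fin n) (Fin n) F) * U⁻¹
          = (U⁻¹ * U) * (f k : Matrix (Fin n) (Fin n) F) * U⁻¹ := by
            rw [hUinvU, one_mul]
        _ = U⁻¹ * (U * (f k : Matrix (Fin n) (Fin n) F)) * U⁻¹ := by
            rw [Matrix.mul_assoc U⁻¹ U _]
        _ = U⁻¹ * ((e (π k) : Matrix (Fin n) (Fin n) F) * U) * U⁻¹ := by rw [hUf k]
        _ = U⁻¹ * (e (π k) : Matrix (Fin n) (Fin n) F) * (U * U⁻¹) := by
            simp only [Matrix.mul_assoc]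
        _ = U⁻¹ * (e (π k) : Matrix (Fin n) (Fin n) F) := by rw [hUUinv, Matrix.mul_one]
    -- the key pointwise fact
    have hkey : ∀ i : ℕ, ∀ hi1 : i + 1 < n,
        ((π ⟨i + 1, hi1⟩ : ℕ) < (π ⟨i, by omega⟩ : ℕ)) ∧
          degElem η (π ⟨i + 1, hi1⟩ : ℕ) (π ⟨i, by omega⟩ : ℕ) = (η i)⁻¹ := by
      intro i hi1
      set ii : Fin n := ⟨i, by omega⟩ with hii_def
      set jj : Fin n := ⟨i + 1, hi1⟩ with hjj_def
      have hiijj : ii ≤ jj := by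
        rw [hii_def, hjj_def, Fin.mk_le_mk]
        omega
      set x : UTn n F := ⟨Matrix.single ii jj 1, degInv_stdBasis_mem hiijj 1⟩
        with hx_def
      have hx_ne : x ≠ 0 := by
        intro hc
        have := congrArg (fun M : UTn n F => (M : Matrix (Fin n) (Fin n) F) ii jj) hc
        simpa [hx_def] using this
      have hxdec : x = e ii * x * e jj := by
        apply Subtype.ext
        simp [hx_def, he_def]
      have hMdec : ρ x = f jj * (ρ x * f ii) := by
        conv_lhs => rw [hxdec]
        rw [hmul (e ii * x) (e jj), hmul (e ii) x]
      set Mm : Matrix (Fin n) (Fin n) F := ((ρ x : UTn n F) : Matrix (Fin n) (Fin n) F)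
        with hMm_def
      have hMm_tri : Mm.BlockTriangular id := (ρ x).2
      have hMmdec : Mm = (f jj : Matrix (Fin n) (Fin n) F)
          * (Mm * (f ii : Matrix (Fin n) (Fin n) F)) := by
        have h1 := congrArg Subtype.val hMdec
        rw [MulMemClass.coe_mul, MulMemClass.coe_mul] at h1
        exact h1
      set a : Fin n := π jj with ha_def
      set b : Fin n := π ii with hb_def
      set N : Matrix (Fin n) (Fin n) F := U * Mm * U⁻¹ with hN_def
      have hMrec : Mm = U⁻¹ * N * U := by
        rw [hN_def]
        calc Mm = (U⁻¹ * U) * Mm * (U⁻¹ * U) := by rw [hUinvU, one_mul, mul_one]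
          _ = U⁻¹ * (U * Mm * U⁻¹) * U := by simp only [Matrix.mul_assoc]
      have hNE : N = (e a : Matrix (Fin n) (Fin n) F) * N
          * (e b : Matrix (Fin n) (Fin n) F) := by
        conv_lhs => rw [hN_def]
        conv_lhs => rw [hMmdec]
        calc U * ((f jj : Matrix (Fin n) (Fin n) F)
              * (Mm * (f ii : Matrix (Fin n) (Fin n) F))) * U⁻¹
            = (U * (f jj : Matrix (Fin n) (Fin n) F)) * Mm
              * ((f ii : Matrix (Fin n) (Fin n) F) * U⁻¹) := by
              simp only [Matrix.mul_assoc]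
          _ = ((e a : Matrix (Fin n) (Fin n) F) * U) * Mm
              * (U⁻¹ * (e b : Matrix (Fin n) (Fin n) F)) := by
              rw [hUf jj, hfUinv ii, ha_def, hb_def]
          _ = (e a : Matrix (Fin n) (Fin n) F) * N * (e b : Matrix (Fin n) (Fin n) F) := by
              rw [hN_def]
              simp only [Matrix.mul_assoc]
      have hNform : N = Matrix.single a b (N a b) := by
        ext p q
        by_cases hq : q = b
        · subst hq
          by_cases hp : p = a
          · subst hp
            rw [Matrix.single_apply_same]
          · conv_lhs => rw [hNE]
            rw [he_coe, he_coe]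
            rw [Matrix.mul_single_apply_same, mul_one]
            rw [Matrix.single_mul_apply_of_ne _ _ _ _ _ hp]
            exact (Matrix.single_apply_of_ne _ _ _ _ _ (fun hc => hp hc.1.symm)).symm
        · conv_lhs => rw [hNE]
          rw [he_coe, he_coe]
          rw [Matrix.mul_single_apply_of_ne _ _ _ _ _ hq]
          exact (Matrix.single_apply_of_ne _ _ _ _ _ (fun hc => hq hc.2.symm)).symm
      have hMm_ne : Mm ≠ 0 := by
        intro hc
        apply hx_ne
        apply ρ.injective
        rw [show ρ x = 0 from Subtype.ext (by rw [← hMm_def]; exact hc), map_zero]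
      have hc_ne : N a b ≠ 0 := by
        intro hc
        apply hMm_ne
        rw [hMrec, hNform, hc, Matrix.single_zero, Matrix.mul_zero, Matrix.zero_mul]
      have hN_tri : N.BlockTriangular id := (hU_tri.mul hMm_tri).mul hUinv_tri
      have hab_le : a ≤ b := by
        by_contra hab
        push_neg at hab
        exact hc_ne (hN_tri (show (id b : Fin n) < id a from hab))
      have hab_ne : a ≠ b := by
        intro hab
        have h1 : jj = ii := hπ_inj (show π jj = π ii from hab)
        have h2 : i + 1 = i := congrArg Fin.val h1
        omega
      have hab_lt : (a : ℕ) < (b : ℕ) := Fin.lt_def.mp (lt_of_le_of_ne hab_le hab_ne)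
      -- the entry of Mm at (a, b)
      have hMab : Mm a b = (U⁻¹) a a * (N a b * U b b) := by
        conv_lhs => rw [hMrec]
        conv_lhs => rw [hNform]
        rw [Matrix.mul_assoc, Matrix.mul_apply]
        rw [Finset.sum_eq_single a (fun r _ hr => ?_) (fun h => absurd (Finset.mem_univ a) h)]
        · rw [Matrix.single_mul_apply_same]
        · rw [Matrix.single_mul_apply_of_ne _ _ _ _ _ hr, mul_zero]
      have hMab_ne : Mm a b ≠ 0 := by
        rw [hMab, hUinv_diag, hU_diag, one_mul, mul_one]
        exact hc_ne
      -- degrees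
      have hx_comp : x ∈ utComponent n η (η i) := by
        intro p q hpq
        rw [hx_def] at hpq
        by_cases hp : ii = p ∧ jj = q
        · rcases hp with ⟨hp, hq⟩
          subst hp; subst hq
          show degElem η i (i + 1) = η i
          exact degInv_degElem_single η i
        · exact absurd (Matrix.single_apply_of_ne _ _ _ _ _ hp) hpq
      have hdx := hdeg (η i) x hx_comp
      have hfinal := hdx a b hMab_ne
      exact ⟨hab_lt, hfinal⟩
    -- translate to a ℕ-valued function and pin down π
    set pv : ℕ → ℕ := fun k => if h : k < n then (π ⟨k, h⟩ : ℕ) else 0 with hpv_def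
    have hpv_eq : ∀ k : ℕ, ∀ h : k < n, pv k = (π ⟨k, h⟩ : ℕ) := by
      intro k h
      rw [hpv_def]
      simp only [dif_pos h]
    have hpv_lt : ∀ i : ℕ, i + 1 < n → pv (i + 1) < pv i := by
      intro i hi1
      rw [hpv_eq (i + 1) hi1, hpv_eq i (by omega)]
      exact (hkey i hi1).1
    have hpv_bound : ∀ k : ℕ, k < n → pv k < n := by
      intro k hk
      rw [hpv_eq k hk]
      exact (π ⟨k, hk⟩).isLt
    have hstep : ∀ d k : ℕ, k + d < n → pv (k + d) + d ≤ pv k := by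
      intro d
      induction d with
      | zero => intro k _; simp
      | succ d ih =>
        intro k hkd
        have h1 := hpv_lt (k + d) (by omega)
        have h2 := ih k (by omega)
        have e1 : pv (k + (d + 1)) = pv (k + d + 1) := by rw [← Nat.add_assoc]
        omega
    have hpv_val : ∀ k : ℕ, k < n → pv k = n - 1 - k := by
      intro k hk
      have hub := hstep k 0 (by omega)
      rw [Nat.zero_add] at hub
      have hlb := hstep (n - 1 - k) k (by omega)
      have e2 : k + (n - 1 - k) = n - 1 := by omega
      rw [e2] at hlb
      have hb0 := hpv_bound 0 (by omega)
      omega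
    -- conclude
    intro i hi
    have hi1 : i + 1 < n := by omega
    have hd := (hkey i hi1).2
    rw [← hpv_eq (i + 1) hi1, ← hpv_eq i (by omega)] at hd
    rw [hpv_val (i + 1) hi1, hpv_val i (by omega)] at hd
    have e1 : n - 1 - (i + 1) = n - 2 - i := by omega
    have e2 : n - 1 - i = (n - 2 - i) + 1 := by omega
    rw [e1, e2, degInv_degElem_single] at hd
    rw [hd, inv_inv]
  · intro h
    refine ⟨{ toFun := flipUT, invFun := flipUT,
              map_add' := flipUT_add, map_smul' := flipUT_smul,
              left_inv := flipUT_flipUT, right_inv := flipUT_flipUT },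
            fun x y => flipUT_mul x y, fun x => flipUT_flipUT x, ?_⟩
    intro g M hM p q hpq
    have h1 : (M : Matrix (Fin n) (Fin n) F) q.rev p.rev ≠ 0 := hpq
    have h2 := hM q.rev p.rev h1
    have hle : ¬((p.rev : Fin n) < q.rev) := fun hc => h1 (M.2 hc)
    have hrevval : ∀ r : Fin n, ((r.rev : Fin n) : ℕ) = n - 1 - (r : ℕ) := fun r => by
      rw [Fin.val_rev]; omega
    have hpq' : (p : ℕ) ≤ (q : ℕ) := by
      have h3 : (q.rev : ℕ) ≤ (p.rev : ℕ) := by omega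
      rw [hrevval, hrevval] at h3
      have := p.isLt
      have := q.isLt
      omega
    have hmain := degInv_degElem_mul_rev η h (i := (p : ℕ)) (j := (q : ℕ)) hpq'
      (by have := q.isLt; omega)
    rw [hrevval, hrevval] at h2
    rw [h2] at hmain
    exact mul_eq_one_iff_eq_inv.mp hmain
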